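/- Let A = {0, a_2, ..., a_n} with 0 < a_2 < ... < a_n and gcd(a_2, ..., a_n) = 1. Then there exist a positive integer σ, non-negative integers c_1, c_2, and finite sets C_1 ⊆ [0, c_1 - 2], C_2 ⊆ [0, c_2 - 2] such that for all s ≥ σ, sA = C_1 ∪ [c_1, s·a_n - c_2] ∪ (s·a_n - C_2), the three pieces being pairwise disjoint. -/

import Mathlib

open Finset Pointwise

/-- The s-fold iterated sumset of a finite set of natural numbers; `sumset A 0 = {0}`. -/
def sumset (A : Finset ℕ) : ℕ → Finset ℕ
  | 0 => {0}
  | s + 1 => A + sumset A s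

lemma mem_sumset_succ {A : Finset ℕ} {s x : ℕ} :
    x ∈ sumset A (s+1) ↔ ∃ a ∈ A, ∃ y ∈ sumset A s, a + y = x := by
  simp [sumset, Finset.mem_add]

lemma zero_mem_sumset (A : Finset ℕ) (h0 : 0 ∈ A) (s : ℕ) : 0 ∈ sumset A s := by
  induction s with
  | zero => simp [sumset]
  | succ s ih => exact mem_sumset_succ.2 ⟨0, h0, 0, ih, rfl⟩

lemma sumset_add (A : Finset ℕ) (s t : ℕ) :
    sumset A (s + t) = sumset A s + sumset A t := by
  induction s with
  | zero => simp [sumset]; ext x; simp [Finset.mem_add]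
  | succ s ih =>
    have : s + 1 + t = (s + t) + 1 := by omega
    rw [this]
    show A + sumset A (s + t) = A + sumset A s + sumset A t
    rw [ih, add_assoc]

lemma add_mem_sumset {A : Finset ℕ} {s t x y : ℕ} (hx : x ∈ sumset A s)
    (hy : y ∈ sumset A t) : x + y ∈ sumset A (s + t) := by
  rw [sumset_add]; exact Finset.add_mem_add hx hy

lemma sumset_mono {A : Finset ℕ} (h0 : 0 ∈ A) {s t : ℕ} (h : s ≤ t) :
    sumset A s ⊆ sumset A t := by
  intro x hx
  obtain ⟨k, rfl⟩ := Nat.exists_eq_add_of_le h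
  have := add_mem_sumset hx (zero_mem_sumset A h0 k)
  simpa using this

lemma mem_sumset_le {A : Finset ℕ} {an s x : ℕ} (hmax : ∀ a ∈ A, a ≤ an)
    (hx : x ∈ sumset A s) : x ≤ s * an := by
  induction s generalizing x with
  | zero => simp_all [sumset]
  | succ s ih =>
    obtain ⟨a, ha, y, hy, rfl⟩ := mem_sumset_succ.1 hx
    have := ih hy
    have := hmax a ha
    have : (s+1) * an = s * an + an := by ring
    omega

lemma exists_le_sumset {A : Finset ℕ} {s x : ℕ} (hx : x ∈ sumset A s) :
    ∃ t ≤ x, x ∈ sumset A t := by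
  induction s generalizing x with
  | zero =>
    have : x = 0 := by simpa [sumset] using hx
    exact ⟨0, by omega, by simp [sumset, this]⟩
  | succ s ih =>
    obtain ⟨a, ha, y, hy, rfl⟩ := mem_sumset_succ.1 hx
    obtain ⟨t, ht, hyt⟩ := ih hy
    rcases Nat.eq_zero_or_pos a with rfl | hapos
    · exact ⟨t, by omega, by simpa using hyt⟩
    · exact ⟨t + 1, by omega, mem_sumset_succ.2 ⟨a, ha, y, hyt, rfl⟩⟩

lemma mem_sumset_one {A : Finset ℕ} {a : ℕ} (ha : a ∈ A) : a ∈ sumset A 1 :=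
  mem_sumset_succ.2 ⟨a, ha, 0, by simp [sumset], by omega⟩

lemma nsmul_mem_sumset {A : Finset ℕ} {a : ℕ} (ha : a ∈ A) (k : ℕ) :
    k * a ∈ sumset A k := by
  induction k with
  | zero => simp [sumset]
  | succ k ih =>
    have := add_mem_sumset (mem_sumset_one ha) ih
    have h : a + k * a = (k+1) * a := by ring
    rw [h] at this
    simpa [Nat.add_comm] using this

lemma mul_mem_sumset {A : Finset ℕ} {x s : ℕ} (hx : x ∈ sumset A s) (k : ℕ) :
    k * x ∈ sumset A (k * s) := by
  induction k with
  | zero => simp [sumset]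
  | succ k ih =>
    have := add_mem_sumset hx ih
    have h1 : x + k * x = (k+1) * x := by ring
    have h2 : s + k * s = (k+1) * s := by ring
    rw [h1, h2] at this
    exact this

/-- x is representable: in some iterated sumset. -/
def inM (A : Finset ℕ) (x : ℕ) : Prop := ∃ t, x ∈ sumset A t

lemma inM_add {A : Finset ℕ} {x y : ℕ} (hx : inM A x) (hy : inM A y) : inM A (x + y) := by
  obtain ⟨s, hs⟩ := hx; obtain ⟨t, ht⟩ := hy
  exact ⟨s + t, add_mem_sumset hs ht⟩

lemma inM_mul {A : Finset ℕ} {x : ℕ} (hx : inM A x) (k : ℕ) : inM A (k * x) := by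
  obtain ⟨s, hs⟩ := hx
  exact ⟨k * s, mul_mem_sumset hs k⟩

lemma inM_of_mem {A : Finset ℕ} {a : ℕ} (ha : a ∈ A) : inM A a := ⟨1, mem_sumset_one ha⟩

lemma inM_zero (A : Finset ℕ) : inM A 0 := ⟨0, by simp [sumset]⟩

lemma bezout (A : Finset ℕ) : ∀ S : Finset ℕ, S ⊆ A →
    ∃ P Q : ℕ, inM A P ∧ inM A Q ∧ P = Q + S.gcd id := by
  intro S
  induction S using Finset.induction_on with
  | empty => intro _; exact ⟨0, 0, inM_zero A, inM_zero A, by simp⟩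
  | insert _ _ hnotmem =>
    rename_i a S ih
    intro hsub
    have haA : a ∈ A := hsub (Finset.mem_insert_self a S)
    obtain ⟨P, Q, hP, hQ, hPQ⟩ := ih (fun x hx => hsub (Finset.mem_insert_of_mem hx))
    have hgins : (insert a S).gcd id = Nat.gcd a (S.gcd id) := by
      rw [Finset.gcd_insert]; rfl
    set g := S.gcd id with hg
    rcases Nat.eq_zero_or_pos g with hg0 | hgpos
    · refine ⟨a, 0, inM_of_mem haA, inM_zero A, ?_⟩
      rw [hgins, hg0]; simp
    · by_cases hdvd : Nat.gcd a g = g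
      · exact ⟨P, Q, hP, hQ, by rw [hgins, hdvd]; exact hPQ⟩
      · have hlt : Nat.gcd a g < g :=
          lt_of_le_of_ne (Nat.le_of_dvd hgpos (Nat.gcd_dvd_right a g)) hdvd
        obtain ⟨m, -, hm⟩ := Nat.exists_mul_mod_eq_gcd hlt
        set v := a * m / g with hv
        have hdiv : a * m = v * g + Nat.gcd a g := by
          rw [hv, ← hm]; exact (Nat.div_add_mod' (a*m) g).symm
        refine ⟨v * Q + a * m, v * P, ?_, inM_mul hP v, ?_⟩
        · exact inM_add (inM_mul hQ v) (by
            have : a * m = m * a := by ring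
            rw [this]; exact ⟨m, nsmul_mem_sumset haA m⟩)
        · rw [hgins, hdiv, hPQ]; ring

lemma exists_N (A : Finset ℕ) (hgcd : A.gcd id = 1) :
    ∃ N, ∀ m, N ≤ m → inM A m := by
  obtain ⟨P, Q, hP, hQ, hPQ⟩ := bezout A A (Finset.Subset.refl A)
  rw [hgcd] at hPQ
  rcases Nat.eq_zero_or_pos Q with rfl | hQpos
  · refine ⟨0, fun m _ => ?_⟩
    have := inM_mul hP m
    simpa [hPQ] using this
  · refine ⟨Q * Q, fun m hm => ?_⟩
    set q := m / Q with hq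
    set r := m % Q with hr
    have hrQ : r < Q := Nat.mod_lt m hQpos
    have hqQ : Q ≤ q := by
      rw [hq]; exact Nat.le_div_iff_mul_le hQpos |>.2 (by nlinarith)
    have hm' : m = (q - r) * Q + r * P := by
      have h1 : q * Q + r = m := by rw [hq, hr]; exact Nat.div_add_mod' m Q
      have h2 : r ≤ q := le_of_lt (lt_of_lt_of_le hrQ hqQ)
      rw [hPQ]
      have : (q - r) * Q + r * (Q + 1) = q * Q + r := by
        have := Nat.sub_add_cancel h2
        nlinarith [Nat.sub_add_cancel h2]
      omega
    rw [hm']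
    exact inM_add (inM_mul hQ (q - r)) (inM_mul hP r)

lemma middle (A : Finset ℕ) (h0 : 0 ∈ A) {an : ℕ} (hanA : an ∈ A) (hanpos : 0 < an)
    {N : ℕ} (hN : ∀ m, N ≤ m → inM A m) :
    ∀ s x, N ≤ x → x + (N + an) * an ≤ s * an → x ∈ sumset A s := by
  intro s x hxN hxs
  have hsN : N + an ≤ s := by
    have : (N + an) * an ≤ s * an := by omega
    exact Nat.le_of_mul_le_mul_right this hanpos
  set k := (x - N) / an with hk
  set r := x - k * an with hr
  have hkan : k * an ≤ x - N := by rw [hk]; exact Nat.div_mul_le_self _ _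
  have hrN : N ≤ r := by omega
  have hrlt : r < N + an := by
    have h1 : x - N = k * an + (x - N) % an := by
      rw [hk]; exact (Nat.div_add_mod' (x - N) an).symm
    have h2 : (x - N) % an < an := Nat.mod_lt _ hanpos
    omega
  obtain ⟨tr, hrt⟩ := hN r hrN
  obtain ⟨t, htle, ht⟩ := exists_le_sumset hrt
  have htb : t ≤ N + an := by omega
  have hks : k ≤ s - (N + an) := by
    have h3 : x - N ≤ (s - (N + an)) * an := by
      have : (s - (N + an)) * an = s * an - (N + an) * an := by
        rw [Nat.sub_mul]
      omega
    rw [hk]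
    exact (Nat.div_le_iff_le_mul_add_pred hanpos).2
      (le_trans (by rw [Nat.mul_comm]; exact h3) (Nat.le_add_right _ _))
  have hmem : k * an + r ∈ sumset A (k + t) :=
    add_mem_sumset (nsmul_mem_sumset hanA k) ht
  have hxeq : x = k * an + r := by omega
  rw [hxeq]
  exact sumset_mono h0 (by omega) hmem

lemma half (A : Finset ℕ) (h0 : 0 ∈ A) {an : ℕ} (hanA : an ∈ A) (hanpos : 0 < an)
    (hgcd : A.gcd id = 1) :
    ∃ (N c1 : ℕ) (C1 : Finset ℕ), 0 < N ∧ c1 ≤ N ∧ (∀ x ∈ C1, x + 2 ≤ c1) ∧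
      ∀ s x, N ≤ s → x + (N + an) * an ≤ s * an →
        (x ∈ sumset A s ↔ x ∈ C1 ∨ c1 ≤ x) := by
  obtain ⟨N₀, hN₀⟩ := exists_N A hgcd
  set N := N₀ + 1 with hNdef
  have hN : ∀ m, N ≤ m → inM A m := fun m hm => hN₀ m (by omega)
  have hNmem : ∀ m, N ≤ m → m ≤ N → m ∈ sumset A N := by
    intro m h1 h2
    obtain ⟨t, ht⟩ := hN m h1
    obtain ⟨t', ht'le, ht'⟩ := exists_le_sumset ht
    exact sumset_mono h0 (by omega) ht'
  have hPN : ∀ m ∈ Finset.Icc N N, m ∈ sumset A N := by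
    intro m hm; rw [Finset.mem_Icc] at hm; exact hNmem m hm.1 hm.2
  have hex : ∃ t, ∀ m ∈ Finset.Icc t N, m ∈ sumset A N := ⟨N, hPN⟩
  set c1 := Nat.find hex with hc1def
  have hc1 : ∀ m ∈ Finset.Icc c1 N, m ∈ sumset A N := Nat.find_spec hex
  have hc1le : c1 ≤ N := Nat.find_min' hex hPN
  have hc1pred : 0 < c1 → (c1 - 1) ∉ sumset A N := by
    intro hpos hmem
    have hmin := Nat.find_min hex (m := c1 - 1) (by omega)
    apply hmin
    intro m hm
    rw [Finset.mem_Icc] at hm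
    rcases Nat.eq_or_lt_of_le hm.1 with heq | hlt
    · rw [← heq]; exact hmem
    · exact hc1 m (Finset.mem_Icc.2 ⟨by omega, hm.2⟩)
  refine ⟨N, c1, (sumset A N).filter (· < c1), by omega, hc1le, ?_, ?_⟩
  · intro x hx
    rw [Finset.mem_filter] at hx
    have hx1 := hx.1
    have hx2 := hx.2
    have hne : x ≠ c1 - 1 := by
      intro heq
      exact hc1pred (by omega) (heq ▸ hx1)
    omega
  · intro s x hs hreg
    constructor
    · intro hx
      by_cases hxc : c1 ≤ x
      · exact Or.inr hxc
      · left
        rw [Finset.mem_filter]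
        obtain ⟨t, htle, ht⟩ := exists_le_sumset hx
        exact ⟨sumset_mono h0 (by omega) ht, by omega⟩
    · rintro (hx | hx)
      · rw [Finset.mem_filter] at hx
        exact sumset_mono h0 hs hx.1
      · by_cases hxN : N ≤ x
        · exact middle A h0 hanA hanpos hN s x hxN hreg
        · exact sumset_mono h0 hs (hc1 x (Finset.mem_Icc.2 ⟨hx, by omega⟩))

lemma sumset_succ' (A : Finset ℕ) (s : ℕ) : sumset A (s+1) = A + sumset A s := rfl

lemma sumset_reflect (A : Finset ℕ) {an : ℕ} (hmax : ∀ a ∈ A, a ≤ an) (s : ℕ) :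
    sumset (A.image (fun a => an - a)) s = (sumset A s).image (fun x => s * an - x) := by
  induction s with
  | zero => simp [sumset]
  | succ s ih =>
    rw [sumset_succ', sumset_succ', ih]
    ext z
    simp only [Finset.mem_add, Finset.mem_image]
    constructor
    · rintro ⟨b, ⟨a, ha, rfl⟩, y, ⟨x, hx, rfl⟩, rfl⟩
      refine ⟨a + x, ⟨a, ha, x, hx, rfl⟩, ?_⟩
      have h1 := hmax a ha
      have h2 := mem_sumset_le hmax hx
      have h3 : (s+1)*an = s*an + an := by ring
      omega
    · rintro ⟨w, ⟨a, ha, x, hx, rfl⟩, rfl⟩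
      refine ⟨an - a, ⟨a, ha, rfl⟩, s*an - x, ⟨x, hx, rfl⟩, ?_⟩
      have h1 := hmax a ha
      have h2 := mem_sumset_le hmax hx
      have h3 : (s+1)*an = s*an + an := by ring
      omega

lemma sumset_reflect' (A : Finset ℕ) {an : ℕ} (hmax : ∀ a ∈ A, a ≤ an) (s : ℕ) :
    sumset A s = (sumset (A.image (fun a => an - a)) s).image (fun x => s * an - x) := by
  rw [sumset_reflect A hmax s, Finset.image_image]
  ext x
  simp only [Finset.mem_image, Function.comp_apply]
  constructor
  · intro hx
    refine ⟨x, hx, ?_⟩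
    have := mem_sumset_le hmax hx
    omega
  · rintro ⟨w, hw, rfl⟩
    have := mem_sumset_le hmax hw
    have h : s * an - (s * an - w) = w := by omega
    rw [h]
    exact hw

theorem stmt8 (A : Finset ℕ) (h0 : 0 ∈ A) (hn : 2 ≤ A.card) (hgcd : A.gcd id = 1)
    (an : ℕ) (han : an = A.max' ⟨0, h0⟩) :
    ∃ (σ c1 c2 : ℕ) (C1 C2 : Finset ℕ),
      0 < σ ∧
      (∀ x ∈ C1, x + 2 ≤ c1) ∧ (∀ x ∈ C2, x + 2 ≤ c2) ∧
      ∀ s ≥ σ,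
        sumset A s = C1 ∪ Finset.Icc c1 (s * an - c2) ∪ C2.image (fun c => s * an - c) ∧
        Disjoint C1 (Finset.Icc c1 (s * an - c2)) ∧
        Disjoint C1 (C2.image (fun c => s * an - c)) ∧
        Disjoint (Finset.Icc c1 (s * an - c2)) (C2.image (fun c => s * an - c)) := by
  have hmaxA : ∀ a ∈ A, a ≤ an := by
    intro a ha; rw [han]; exact Finset.le_max' A a ha
  have hanA : an ∈ A := by rw [han]; exact Finset.max'_mem A _
  have hanpos : 0 < an := by
    obtain ⟨a, ha, b, hb, hab⟩ := Finset.one_lt_card.1 hn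
    rcases Nat.eq_zero_or_pos an with h | h
    · exfalso; have h1 := hmaxA a ha; have h2 := hmaxA b hb; omega
    · exact h
  have h0' : 0 ∈ A.image (fun a => an - a) := Finset.mem_image.2 ⟨an, hanA, by omega⟩
  have hanA' : an ∈ A.image (fun a => an - a) := Finset.mem_image.2 ⟨0, h0, by omega⟩
  have hmaxA' : ∀ b ∈ A.image (fun a => an - a), b ≤ an := by
    intro b hb; rw [Finset.mem_image] at hb; obtain ⟨a, ha, rfl⟩ := hb; omega
  have hgcd' : (A.image (fun a => an - a)).gcd id = 1 := by
    have h1 : (A.image (fun a => an - a)).gcd id ∣ 1 := by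
      rw [← hgcd]
      apply Finset.dvd_gcd
      intro a ha
      have d1 : (A.image (fun a => an - a)).gcd id ∣ an := Finset.gcd_dvd hanA'
      have d2 : (A.image (fun a => an - a)).gcd id ∣ (an - a) :=
        Finset.gcd_dvd (Finset.mem_image.2 ⟨a, ha, rfl⟩)
      have heq : a = an - (an - a) := by have := hmaxA a ha; omega
      show _ ∣ a
      rw [heq]
      exact Nat.dvd_sub d1 d2
    exact Nat.dvd_one.mp h1
  obtain ⟨N₁, c1, C1, hN₁pos, hc1le, hC1b, hiff1⟩ := half A h0 hanA hanpos hgcd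
  obtain ⟨N₂, c2, C2, hN₂pos, hc2le, hC2b, hiff2⟩ := half _ h0' hanA' hanpos hgcd'
  set R := (N₁ + N₂ + an) * an with hR
  set σ := R + (N₂ + an) * an + N₁ + N₂ + 1 with hσ
  have hRge : N₁ + N₂ + an ≤ R := Nat.le_mul_of_pos_right _ hanpos
  have hP1 : (N₁ + an) * an ≤ R := Nat.mul_le_mul_right an (by omega)
  refine ⟨σ, c1, c2, C1, C2, by omega, hC1b, hC2b, ?_⟩
  intro s hs
  have hsan : σ ≤ s * an := le_trans hs (Nat.le_mul_of_pos_right s hanpos)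
  have key : ∀ x, x ∈ sumset A s ↔
      x ∈ C1 ∪ Finset.Icc c1 (s * an - c2) ∪ C2.image (fun c => s * an - c) := by
    intro x
    simp only [Finset.mem_union, Finset.mem_Icc, Finset.mem_image]
    by_cases hxreg : x + R ≤ s * an
    · rw [hiff1 s x (by omega) (by omega)]
      constructor
      · rintro (h | h)
        · exact Or.inl (Or.inl h)
        · exact Or.inl (Or.inr ⟨h, by omega⟩)
      · rintro ((h | h) | ⟨c, hc, hceq⟩)
        · exact Or.inl h
        · exact Or.inr h.1
        · exfalso; have := hC2b c hc; omega
    · by_cases hxle : x ≤ s * an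
      · have hyreg : (s * an - x) + (N₂ + an) * an ≤ s * an := by omega
        have hxiff : x ∈ sumset A s ↔ (s * an - x) ∈ sumset (A.image (fun a => an - a)) s := by
          rw [sumset_reflect' A hmaxA s]
          simp only [Finset.mem_image]
          constructor
          · rintro ⟨w, hw, rfl⟩
            have hwle := mem_sumset_le hmaxA' hw
            have h : s * an - (s * an - w) = w := by omega
            rw [h]; exact hw
          · intro hy'
            exact ⟨s * an - x, hy', by omega⟩
        rw [hxiff, hiff2 s (s * an - x) (by omega) hyreg]
        have hxbig : N₁ < x := by omega
        constructor
        · rintro (h | h)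
          · exact Or.inr ⟨s * an - x, h, by omega⟩
          · exact Or.inl (Or.inr ⟨by omega, by omega⟩)
        · rintro ((h | h) | ⟨c, hc, hceq⟩)
          · exact absurd (hC1b x h) (by omega)
          · right; omega
          · left
            have hcb := hC2b c hc
            have : s * an - x = c := by omega
            rw [this]; exact hc
      · constructor
        · intro h; exact absurd (mem_sumset_le hmaxA h) (by omega)
        · rintro ((h | h) | ⟨c, hc, hceq⟩)
          · exact absurd (hC1b x h) (by omega)
          · exact absurd h.2 (by omega)
          · exfalso; omega
  refine ⟨Finset.ext key, ?_, ?_, ?_⟩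
  · rw [Finset.disjoint_left]
    intro a haC haI
    rw [Finset.mem_Icc] at haI
    have := hC1b a haC
    omega
  · rw [Finset.disjoint_left]
    intro a haC haI
    rw [Finset.mem_image] at haI
    obtain ⟨c, hc, hceq⟩ := haI
    have h1 := hC1b a haC
    have h2 := hC2b c hc
    omega
  · rw [Finset.disjoint_left]
    intro a haI haJ
    rw [Finset.mem_Icc] at haI
    rw [Finset.mem_image] at haJ
    obtain ⟨c, hc, hceq⟩ := haJ
    have h2 := hC2b c hc
    omega
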